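/- Let 0 < α < 2, let u : ℝ → ℝ be a 2π-periodic C² function and let g : ℝ → ℝ be a 2π-periodic C¹ function. Then ∫_{−π}^{π} g(x) · Λ^α u(x) dx = (c_α/2) ∫_{−π}^{π} ∫_{−π}^{π} (g(x) − g(x−η)) (u(x) − u(x−η)) K_α(η) dη dx. -/

import Mathlib

open MeasureTheory Real

/-- The constant `c_σ = Γ(1+σ) cos((1−σ)π/2) / π`. -/
noncomputable def cFrac (σ : ℝ) : ℝ :=
  Real.Gamma (1 + σ) * Real.cos ((1 - σ) * Real.pi / 2) / Real.pi

/-- The periodized kernel `K_σ(η) = ∑_{k∈ℤ} |η + 2kπ|^{-(1+σ)}`. -/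
noncomputable def Kper (σ η : ℝ) : ℝ :=
  ∑' k : ℤ, |η + 2 * (k : ℝ) * Real.pi| ^ (-(1 + σ))

/-- The fractional Laplacian `Λ^σ f` of a `2π`-periodic function, defined by
`Λ^σ f(x) = (c_σ/2) ∫_{-π}^{π} (2f(x) − f(x+η) − f(x−η)) K_σ(η) dη`. -/
noncomputable def fracLap (σ : ℝ) (f : ℝ → ℝ) (x : ℝ) : ℝ :=
  (cFrac σ / 2) *
    ∫ η in (-Real.pi)..Real.pi, (2 * f x - f (x + η) - f (x - η)) * Kper σ η

open Set

section Helpers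

lemma kper_term_nonneg (σ η : ℝ) (k : ℤ) : 0 ≤ |η + 2 * (k:ℝ) * π| ^ (-(1+σ)) :=
  Real.rpow_nonneg (abs_nonneg _) _

lemma kper_key_bound {σ η : ℝ} (hσ : 0 < σ) (hη : |η| ≤ π) {k : ℤ} (hk : k ≠ 0) :
    |η + 2 * (k:ℝ) * π| ^ (-(1+σ)) ≤ |(k:ℝ)| ^ (-(1+σ)) * π ^ (-(1+σ)) := by
  have hk1 : (1:ℝ) ≤ |(k:ℝ)| := by
    have := Int.one_le_abs hk
    calc (1:ℝ) ≤ ((|k| : ℤ) : ℝ) := by exact_mod_cast this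
      _ = |(k:ℝ)| := by push_cast; ring
  have hpi := Real.pi_pos
  have habs : |2 * (k:ℝ) * π| = 2 * |(k:ℝ)| * π := by
    rw [abs_mul, abs_mul, abs_two, abs_of_pos hpi]
  have h2 : |2 * (k:ℝ) * π| ≤ |η + 2 * (k:ℝ) * π| + |η| := by
    calc |2 * (k:ℝ) * π| = |(η + 2 * (k:ℝ) * π) + (-η)| := by ring_nf
      _ ≤ |η + 2 * (k:ℝ) * π| + |(-η)| := abs_add_le _ _
      _ = |η + 2 * (k:ℝ) * π| + |η| := by rw [abs_neg]
  have h1 : |(k:ℝ)| * π ≤ |η + 2 * (k:ℝ) * π| := by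
    rw [habs] at h2; nlinarith
  have hkpos : 0 < |(k:ℝ)| * π := by positivity
  calc |η + 2 * (k:ℝ) * π| ^ (-(1+σ)) ≤ (|(k:ℝ)| * π) ^ (-(1+σ)) :=
        Real.rpow_le_rpow_of_nonpos hkpos h1 (by linarith)
    _ = |(k:ℝ)| ^ (-(1+σ)) * π ^ (-(1+σ)) :=
        Real.mul_rpow (abs_nonneg _) hpi.le

lemma summable_tail {σ : ℝ} (hσ : 0 < σ) :
    Summable (fun k : ℤ => |(k:ℝ)| ^ (-(1+σ)) * π ^ (-(1+σ))) :=
  (Real.summable_abs_int_rpow (by linarith)).mul_right _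

lemma summable_kper_strip {σ η : ℝ} (hσ : 0 < σ) (hη : |η| ≤ π) :
    Summable (fun k : ℤ => |η + 2 * (k:ℝ) * π| ^ (-(1+σ))) := by
  refine ((Set.finite_singleton (0:ℤ)).summable_compl_iff).mp ?_
  refine Summable.of_nonneg_of_le (fun k => kper_term_nonneg σ η k) ?_
    ((summable_tail hσ).subtype _)
  rintro ⟨k, hk⟩
  simp only [Set.mem_compl_iff, Set.mem_singleton_iff] at hk
  exact kper_key_bound hσ hη hk

lemma summable_kper {σ : ℝ} (hσ : 0 < σ) (η : ℝ) :
    Summable (fun k : ℤ => |η + 2 * (k:ℝ) * π| ^ (-(1+σ))) := by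
  set m : ℤ := round (η / (2 * π)) with hm
  have hpi := Real.pi_pos
  have hη' : |η - 2 * (m:ℝ) * π| ≤ π := by
    have h := abs_sub_round (η / (2 * π))
    rw [abs_le] at h ⊢
    have h2 : (0:ℝ) < 2 * π := by positivity
    obtain ⟨ha, hb⟩ := h
    rw [div_sub' h2.ne'] at ha hb
    rw [div_le_iff₀ h2] at hb
    rw [le_div_iff₀ h2] at ha
    constructor <;> [nlinarith; nlinarith]
  have hstrip := summable_kper_strip hσ hη'
  have := hstrip.comp_injective (add_left_injective m)
  refine this.congr fun k => ?_
  simp only [Function.comp_apply]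
  congr 1
  push_cast
  ring

lemma Kper_nonneg (σ η : ℝ) : 0 ≤ Kper σ η :=
  tsum_nonneg (kper_term_nonneg σ η)

lemma Kper_eq_toReal {σ : ℝ} (hσ : 0 < σ) (η : ℝ) :
    Kper σ η = (∑' k : ℤ, ENNReal.ofReal (|η + 2 * (k:ℝ) * π| ^ (-(1+σ)))).toReal := by
  rw [Kper, ← ENNReal.ofReal_tsum_of_nonneg (kper_term_nonneg σ η) (summable_kper hσ η),
    ENNReal.toReal_ofReal (tsum_nonneg (kper_term_nonneg σ η))]

lemma Kper_measurable {σ : ℝ} (hσ : 0 < σ) : Measurable (Kper σ) := by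
  have : Kper σ = fun η => (∑' k : ℤ, ENNReal.ofReal (|η + 2 * (k:ℝ) * π| ^ (-(1+σ)))).toReal :=
    funext fun η => Kper_eq_toReal hσ η
  rw [this]
  apply Measurable.ennreal_toReal
  apply Measurable.ennreal_tsum
  intro k
  apply Measurable.ennreal_ofReal
  measurability

/-- tail constant -/
noncomputable def Ctail (σ : ℝ) : ℝ := ∑' k : ℤ, |(k:ℝ)| ^ (-(1+σ)) * π ^ (-(1+σ))

lemma Ctail_nonneg (σ : ℝ) : 0 ≤ Ctail σ :=
  tsum_nonneg fun _ => mul_nonneg (Real.rpow_nonneg (abs_nonneg _) _)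
    (Real.rpow_nonneg pi_pos.le _)

lemma Kper_le {σ η : ℝ} (hσ : 0 < σ) (hη : |η| ≤ π) :
    Kper σ η ≤ |η| ^ (-(1+σ)) + Ctail σ := by
  classical
  rw [Kper, Summable.tsum_eq_add_tsum_ite (summable_kper hσ η) 0]
  have h0 : |η + 2 * ((0:ℤ):ℝ) * π| ^ (-(1+σ)) = |η| ^ (-(1+σ)) := by norm_num
  rw [h0]
  have hsumite : Summable (fun n : ℤ => if n = 0 then 0 else |η + 2 * (n:ℝ) * π| ^ (-(1+σ))) := by
    refine Summable.of_nonneg_of_le (fun k => ?_) (fun k => ?_) (summable_kper hσ η)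
    · split <;> [rfl; exact kper_term_nonneg σ η _]
    · split <;> [exact kper_term_nonneg σ η _; rfl]
  have hle : (∑' n : ℤ, if n = 0 then 0 else |η + 2 * (n:ℝ) * π| ^ (-(1+σ))) ≤ Ctail σ := by
    refine Summable.tsum_le_tsum (fun k => ?_) hsumite (summable_tail hσ)
    by_cases hk : k = 0
    · subst hk
      simp only [if_pos rfl]
      positivity
    · simp only [if_neg hk]
      exact kper_key_bound hσ hη hk
  linarith

lemma integrableOn_abs_rpow {r : ℝ} (hr : -1 < r) :
    IntegrableOn (fun x : ℝ => |x| ^ r) (Ioc (-π) π) volume := by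
  have hpi := Real.pi_pos
  have hpos : IntegrableOn (fun x : ℝ => |x| ^ r) (Ioc 0 π) volume := by
    have h2 : IntervalIntegrable (fun x : ℝ => x ^ r) volume 0 π :=
      intervalIntegral.intervalIntegrable_rpow' hr
    rw [intervalIntegrable_iff_integrableOn_Ioc_of_le hpi.le] at h2
    exact h2.congr_fun (fun x hx => by rw [abs_of_pos hx.1]) measurableSet_Ioc
  have hneg : IntegrableOn (fun x : ℝ => |x| ^ r) (Ioc (-π) 0) volume := by
    have h3 : IntervalIntegrable (fun x : ℝ => |x| ^ r) volume 0 π := by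
      rw [intervalIntegrable_iff_integrableOn_Ioc_of_le hpi.le]; exact hpos
    have h4 := (IntervalIntegrable.iff_comp_neg (by simp)).mp h3
    simp only [abs_neg] at h4
    have h5 : IntervalIntegrable (fun x : ℝ => |x| ^ r) volume (-π) 0 := by
      have := h4.symm
      simpa using this
    rw [intervalIntegrable_iff_integrableOn_Ioc_of_le (by linarith)] at h5
    exact h5
  have : Ioc (-π) 0 ∪ Ioc 0 π = Ioc (-π) π :=
    Ioc_union_Ioc_eq_Ioc (by linarith) hpi.le
  rw [← this]
  exact hneg.union hpos

lemma integrableOn_sq_mul_Kper {α : ℝ} (hα0 : 0 < α) (hα2 : α < 2) :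
    IntegrableOn (fun η => η ^ 2 * Kper α η) (Ioc (-π) π) volume := by
  have hpi := Real.pi_pos
  have hB : IntegrableOn (fun η : ℝ => |η| ^ (1 - α) + π ^ 2 * Ctail α) (Ioc (-π) π) volume := by
    refine (integrableOn_abs_rpow (by linarith)).add ?_
    exact integrableOn_const measure_Ioc_lt_top.ne
  refine Integrable.mono' hB ?_ ?_
  · exact ((measurable_id.pow_const 2).mul (Kper_measurable hα0)).aestronglyMeasurable
  · filter_upwards [ae_restrict_mem measurableSet_Ioc] with η hη
    have hηπ : |η| ≤ π := by
      rw [abs_le]; exact ⟨hη.1.le, hη.2⟩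
    have hK := Kper_nonneg α η
    have h1 : ‖η ^ 2 * Kper α η‖ = η ^ 2 * Kper α η := by
      rw [Real.norm_eq_abs, abs_of_nonneg (mul_nonneg (sq_nonneg η) hK)]
    rw [h1]
    have h2 : η ^ 2 * Kper α η ≤ η ^ 2 * (|η| ^ (-(1+α)) + Ctail α) :=
      mul_le_mul_of_nonneg_left (Kper_le hα0 hηπ) (sq_nonneg η)
    refine h2.trans ?_
    have h3 : η ^ 2 * |η| ^ (-(1+α)) ≤ |η| ^ (1-α) := by
      rcases eq_or_ne η 0 with rfl | hη0
      · simp only [ne_eq, abs_zero, zero_pow, mul_zero, OfNat.ofNat_ne_zero,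
          not_false_eq_true, zero_mul]
        positivity
      · have habs : (0:ℝ) < |η| := abs_pos.mpr hη0
        rw [← sq_abs, ← Real.rpow_natCast |η| 2, ← Real.rpow_add habs]
        rw [show ((2:ℕ):ℝ) + -(1+α) = 1 - α by push_cast; ring]
    have h4 : η ^ 2 * Ctail α ≤ π ^ 2 * Ctail α := by
      apply mul_le_mul_of_nonneg_right _ (Ctail_nonneg α)
      rw [← sq_abs]
      apply pow_le_pow_left₀ (abs_nonneg η) hηπ
    nlinarith [Ctail_nonneg α]

lemma periodic_deriv' {f : ℝ → ℝ} (hf : Function.Periodic f (2*π)) :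
    Function.Periodic (deriv f) (2*π) := by
  intro x
  calc deriv f (x + 2*π) = deriv (fun y => f (y + 2*π)) x := by
        rw [deriv_comp_add_const]
    _ = deriv f x := by
        rw [show (fun y => f (y + 2*π)) = f from funext fun y => hf y]

lemma bounded_of_periodic {f : ℝ → ℝ} (hf : Continuous f)
    (hper : Function.Periodic f (2*π)) : ∃ M : ℝ, 0 ≤ M ∧ ∀ x, |f x| ≤ M := by
  have hpi := Real.pi_pos
  obtain ⟨M, hM⟩ := (isCompact_Icc (a := (0:ℝ)) (b := 2*π)).exists_bound_of_continuousOn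
    hf.continuousOn
  refine ⟨max M 0, le_max_right _ _, fun x => ?_⟩
  obtain ⟨y, hy, hxy⟩ := hper.exists_mem_Ico₀ (by positivity) x
  rw [hxy]
  exact le_trans (by simpa using hM y (Ico_subset_Icc_self hy)) (le_max_left _ _)

lemma lip_of_deriv_bound {f : ℝ → ℝ} (hf : Differentiable ℝ f) {M : ℝ}
    (hM : ∀ x, |deriv f x| ≤ M) (a b : ℝ) : |f a - f b| ≤ M * |a - b| := by
  have := convex_univ.norm_image_sub_le_of_norm_deriv_le (s := (Set.univ : Set ℝ))
    (fun x _ => hf.differentiableAt) (fun x _ => by simpa using hM x)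
    (Set.mem_univ b) (Set.mem_univ a)
  simpa [Real.norm_eq_abs] using this

lemma second_diff_bound {u : ℝ → ℝ} (hu : ContDiff ℝ 2 u) {M2 : ℝ}
    (hM2 : ∀ a b : ℝ, |deriv u a - deriv u b| ≤ M2 * |a - b|)
    (x η : ℝ) : |2 * u x - u (x + η) - u (x - η)| ≤ 2 * M2 * η ^ 2 := by
  have hud : Differentiable ℝ u := hu.differentiable (by norm_num)
  have hu' : ContDiff ℝ 1 (deriv u) := (contDiff_succ_iff_deriv.mp
    (by norm_num at hu ⊢; exact hu : ContDiff ℝ (1+1) u)).2.2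
  have hM2nn : 0 ≤ M2 := by
    have := (abs_nonneg (deriv u 0 - deriv u 1)).trans (hM2 0 1)
    simpa using this
  have hcont' : Continuous (deriv u) := hu'.continuous
  set h : ℝ → ℝ := fun t => u (x + t) + u (x - t) with hh
  have hderiv : ∀ t : ℝ, HasDerivAt h (deriv u (x + t) - deriv u (x - t)) t := by
    intro t
    have h1 : HasDerivAt (fun t : ℝ => u (x + t)) (deriv u (x + t)) t := by
      have := ((hud (x + t)).hasDerivAt).comp t (((hasDerivAt_id t).const_add x))
      simpa [Function.comp_def] using this
    have h2 : HasDerivAt (fun t : ℝ => u (x - t)) (-(deriv u (x - t))) t := by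
      have := ((hud (x - t)).hasDerivAt).comp t (((hasDerivAt_id t).neg.const_add x))
      simpa [sub_eq_add_neg, Function.comp_def] using this
    have := h1.add h2
    exact this.congr_deriv (by ring)
  have hInt : IntervalIntegrable (fun t => deriv u (x + t) - deriv u (x - t)) volume 0 η := by
    apply Continuous.intervalIntegrable
    exact (hcont'.comp (continuous_const.add continuous_id)).sub
      (hcont'.comp (continuous_const.sub continuous_id))
  have hFTC : ∫ t in (0:ℝ)..η, (deriv u (x + t) - deriv u (x - t)) = h η - h 0 :=
    intervalIntegral.integral_eq_sub_of_hasDerivAt (fun t _ => hderiv t) hInt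
  have hval : h η - h 0 = u (x + η) + u (x - η) - 2 * u x := by
    simp only [hh]; ring_nf
  have hbound : ∀ t ∈ Set.uIoc (0:ℝ) η, ‖deriv u (x + t) - deriv u (x - t)‖ ≤ 2 * M2 * |η| := by
    intro t ht
    have htle : |t| ≤ |η| := by
      rcases Set.mem_uIoc.mp ht with h | h
      · rw [abs_of_pos h.1]; exact le_trans h.2 (le_abs_self η)
      · rw [abs_of_nonpos h.2]; exact le_trans (neg_le_neg h.1.le) (neg_le_abs η)
    calc ‖deriv u (x + t) - deriv u (x - t)‖ ≤ M2 * |(x + t) - (x - t)| := hM2 _ _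
      _ = M2 * (2 * |t|) := by rw [show (x + t) - (x - t) = 2*t by ring, abs_mul, abs_two]
      _ ≤ 2 * M2 * |η| := by nlinarith [abs_nonneg t, abs_nonneg η]
  have := intervalIntegral.norm_integral_le_of_norm_le_const hbound
  rw [hFTC, hval] at this
  have h5 : |2 * u x - u (x + η) - u (x - η)| = ‖u (x + η) + u (x - η) - 2 * u x‖ := by
    rw [Real.norm_eq_abs, abs_sub_comm]; ring_nf
  rw [h5]
  calc ‖u (x + η) + u (x - η) - 2 * u x‖ ≤ 2 * M2 * |η| * |η - 0| := this
    _ = 2 * M2 * (|η| * |η|) := by rw [sub_zero]; ring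
    _ = 2 * M2 * η ^ 2 := by rw [abs_mul_abs_self]; ring

lemma integrable_of_kernel_bound {α : ℝ} (hα0 : 0 < α) (hα2 : α < 2)
    {F : ℝ × ℝ → ℝ}
    (hm : AEStronglyMeasurable F
      ((volume.restrict (Ioc (-π) π)).prod (volume.restrict (Ioc (-π) π))))
    {C : ℝ} (hb : ∀ p : ℝ × ℝ, |F p| ≤ C * (p.2 ^ 2 * Kper α p.2)) :
    Integrable F ((volume.restrict (Ioc (-π) π)).prod (volume.restrict (Ioc (-π) π))) := by
  have h1 : Integrable (fun _ : ℝ => (1:ℝ)) (volume.restrict (Ioc (-π) π)) :=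
    integrableOn_const measure_Ioc_lt_top.ne
  have h2 : Integrable (fun η : ℝ => C * (η ^ 2 * Kper α η)) (volume.restrict (Ioc (-π) π)) :=
    (integrableOn_sq_mul_Kper hα0 hα2).const_mul C
  have hB : Integrable (fun p : ℝ × ℝ => (1:ℝ) * (C * (p.2 ^ 2 * Kper α p.2)))
      ((volume.restrict (Ioc (-π) π)).prod (volume.restrict (Ioc (-π) π))) :=
    h1.mul_prod h2
  refine hB.mono' hm ?_
  filter_upwards with p
  rw [Real.norm_eq_abs, one_mul]
  exact hb p

end Helpers

theorem stmt11 (α : ℝ) (hα0 : 0 < α) (hα2 : α < 2)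
    (u : ℝ → ℝ) (hu : ContDiff ℝ 2 u) (huper : Function.Periodic u (2 * Real.pi))
    (g : ℝ → ℝ) (hg : ContDiff ℝ 1 g) (hgper : Function.Periodic g (2 * Real.pi)) :
    ∫ x in (-Real.pi)..Real.pi, g x * fracLap α u x
      = (cFrac α / 2) * ∫ x in (-Real.pi)..Real.pi, ∫ η in (-Real.pi)..Real.pi,
          (g x - g (x - η)) * (u x - u (x - η)) * Kper α η := by
  have hpi := Real.pi_pos
  have hle : (-π : ℝ) ≤ π := by linarith
  have hgc : Continuous g := hg.continuous
  have huc : Continuous u := hu.continuous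
  have hud : Differentiable ℝ u := hu.differentiable (by norm_num)
  have hgd : Differentiable ℝ g := hg.differentiable (by norm_num)
  have hu' : ContDiff ℝ 1 (deriv u) := (contDiff_succ_iff_deriv.mp
    (by norm_num at hu ⊢; exact hu : ContDiff ℝ (1+1) u)).2.2
  have hu'd : Differentiable ℝ (deriv u) := hu'.differentiable (by norm_num)
  have hg'c : Continuous (deriv g) := (contDiff_succ_iff_deriv.mp
    (by norm_num at hg ⊢; exact hg : ContDiff ℝ (0+1) g)).2.2.continuous
  have hu''c : Continuous (deriv (deriv u)) := (contDiff_succ_iff_deriv.mp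
    (by norm_num at hu' ⊢; exact hu' : ContDiff ℝ (0+1) (deriv u))).2.2.continuous
  -- bounds
  obtain ⟨Mg, hMg0, hMg⟩ := bounded_of_periodic hgc hgper
  obtain ⟨Lg, hLg0, hLgb⟩ := bounded_of_periodic hg'c (periodic_deriv' hgper)
  obtain ⟨Lu, hLu0, hLub⟩ := bounded_of_periodic (hu'.continuous) (periodic_deriv' huper)
  obtain ⟨M2, hM20, hM2b⟩ := bounded_of_periodic hu''c (periodic_deriv' (periodic_deriv' huper))
  have hLg : ∀ a b : ℝ, |g a - g b| ≤ Lg * |a - b| := lip_of_deriv_bound hgd hLgb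
  have hLu : ∀ a b : ℝ, |u a - u b| ≤ Lu * |a - b| := lip_of_deriv_bound hud hLub
  have hM2 : ∀ a b : ℝ, |deriv u a - deriv u b| ≤ M2 * |a - b| :=
    lip_of_deriv_bound hu'd hM2b
  have hsd := second_diff_bound hu hM2 -- ∀ x η, |2 u x - ...| ≤ 2 M2 η^2
  set μ : Measure ℝ := volume.restrict (Ioc (-π) π) with hμ
  set F : ℝ → ℝ → ℝ := fun x η => g x * (2 * u x - u (x + η) - u (x - η)) * Kper α η with hF
  set G : ℝ → ℝ → ℝ := fun x η => (g x - g (x - η)) * (u x - u (x - η)) * Kper α η with hG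
  -- measurability of uncurried F and G
  have hKm : Measurable fun p : ℝ × ℝ => Kper α p.2 := (Kper_measurable hα0).comp measurable_snd
  have hFm : AEStronglyMeasurable (Function.uncurry F) (μ.prod μ) := by
    apply Measurable.aestronglyMeasurable
    exact (((hgc.comp continuous_fst).mul
      (((continuous_const.mul (huc.comp continuous_fst)).sub
        (huc.comp (continuous_fst.add continuous_snd))).sub
        (huc.comp (continuous_fst.sub continuous_snd)))).measurable).mul hKm
  have hGm : AEStronglyMeasurable (Function.uncurry G) (μ.prod μ) := by
    apply Measurable.aestronglyMeasurable
    exact ((((hgc.comp continuous_fst).sub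
      (hgc.comp (continuous_fst.sub continuous_snd))).mul
      ((huc.comp continuous_fst).sub
        (huc.comp (continuous_fst.sub continuous_snd)))).measurable).mul hKm
  -- integrability on the product
  have hFint : Integrable (Function.uncurry F) (μ.prod μ) := by
    refine integrable_of_kernel_bound hα0 hα2 hFm (C := Mg * (2 * M2)) fun p => ?_
    have hK := Kper_nonneg α p.2
    calc |Function.uncurry F p|
        = |g p.1| * |2 * u p.1 - u (p.1 + p.2) - u (p.1 - p.2)| * Kper α p.2 := by
          rw [Function.uncurry, hF]
          rw [abs_mul, abs_mul, abs_of_nonneg hK]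
      _ ≤ Mg * (2 * M2 * p.2 ^ 2) * Kper α p.2 := by
          apply mul_le_mul_of_nonneg_right _ hK
          exact mul_le_mul (hMg p.1) (hsd p.1 p.2) (abs_nonneg _) hMg0
      _ = Mg * (2 * M2) * (p.2 ^ 2 * Kper α p.2) := by ring
  have hGint : Integrable (Function.uncurry G) (μ.prod μ) := by
    refine integrable_of_kernel_bound hα0 hα2 hGm (C := Lg * Lu) fun p => ?_
    have hK := Kper_nonneg α p.2
    calc |Function.uncurry G p|
        = |g p.1 - g (p.1 - p.2)| * |u p.1 - u (p.1 - p.2)| * Kper α p.2 := by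
          rw [Function.uncurry, hG]
          rw [abs_mul, abs_mul, abs_of_nonneg hK]
      _ ≤ (Lg * |p.1 - (p.1 - p.2)|) * (Lu * |p.1 - (p.1 - p.2)|) * Kper α p.2 := by
          apply mul_le_mul_of_nonneg_right _ hK
          exact mul_le_mul (hLg _ _) (hLu _ _) (abs_nonneg _)
            (mul_nonneg hLg0 (abs_nonneg _))
      _ = Lg * Lu * (|p.2| * |p.2|) * Kper α p.2 := by
          rw [show p.1 - (p.1 - p.2) = p.2 by ring]; ring
      _ = Lg * Lu * (p.2 ^ 2 * Kper α p.2) := by rw [abs_mul_abs_self]; ring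
  -- pointwise-in-η identity for the x-integral
  have keyx : ∀ η : ℝ, (∫ x in (-π)..π, F x η) = ∫ x in (-π)..π, G x η := by
    intro η
    have i1 : IntervalIntegrable (fun x => g x * (u x - u (x - η))) volume (-π) π :=
      ((hgc.mul (huc.sub (huc.comp (continuous_id.sub continuous_const))))).intervalIntegrable _ _
    have i2 : IntervalIntegrable (fun x => g x * (u x - u (x + η))) volume (-π) π :=
      ((hgc.mul (huc.sub (huc.comp (continuous_id.add continuous_const))))).intervalIntegrable _ _
    have i3 : IntervalIntegrable (fun x => g (x - η) * (u (x - η) - u x)) volume (-π) π :=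
      (((hgc.comp (continuous_id.sub continuous_const)).mul
        ((huc.comp (continuous_id.sub continuous_const)).sub huc))).intervalIntegrable _ _
    have hA : (∫ x in (-π)..π, g x * (2 * u x - u (x + η) - u (x - η)))
        = (∫ x in (-π)..π, g x * (u x - u (x - η)))
          + ∫ x in (-π)..π, g x * (u x - u (x + η)) := by
      rw [← intervalIntegral.integral_add i1 i2]
      apply intervalIntegral.integral_congr
      intro x _
      ring
    have hB : (∫ x in (-π)..π, g x * (u x - u (x + η)))
        = ∫ x in (-π)..π, g (x - η) * (u (x - η) - u x) := by
      set f : ℝ → ℝ := fun x => g x * (u x - u (x + η)) with hf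
      have hfper : Function.Periodic f (2*π) := by
        intro x
        simp only [hf]
        rw [show x + 2*π + η = (x + η) + 2*π by ring, hgper x, huper x, huper (x+η)]
      have hshift : (∫ x in (-π)..π, f (x - η)) = ∫ x in (-π)..π, f x := by
        rw [intervalIntegral.integral_comp_sub_right f η]
        have h1 : (∫ x in (-π - η)..(π - η), f x) = ∫ x in (-π - η)..(-π - η + 2*π), f x := by
          congr 1
          ring
        have h2 : (∫ x in (-π)..π, f x) = ∫ x in (-π)..(-π + 2*π), f x := by
          congr 1
          ring
        rw [h1, h2, hfper.intervalIntegral_add_eq (-π - η) (-π)]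
      calc (∫ x in (-π)..π, g x * (u x - u (x + η))) = ∫ x in (-π)..π, f x := rfl
        _ = ∫ x in (-π)..π, f (x - η) := hshift.symm
        _ = ∫ x in (-π)..π, g (x - η) * (u (x - η) - u x) := by
            apply intervalIntegral.integral_congr
            intro x _
            simp only [hf]
            rw [show x - η + η = x by ring]
    have hinner : (∫ x in (-π)..π, g x * (2 * u x - u (x + η) - u (x - η)))
        = ∫ x in (-π)..π, (g x - g (x - η)) * (u x - u (x - η)) := by
      rw [hA, hB, ← intervalIntegral.integral_add i1 i3]
      apply intervalIntegral.integral_congr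
      intro x _
      ring
    calc (∫ x in (-π)..π, F x η)
        = (∫ x in (-π)..π, g x * (2 * u x - u (x + η) - u (x - η))) * Kper α η := by
          rw [← intervalIntegral.integral_mul_const]
      _ = (∫ x in (-π)..π, (g x - g (x - η)) * (u x - u (x - η))) * Kper α η := by
          rw [hinner]
      _ = ∫ x in (-π)..π, G x η := by
          rw [← intervalIntegral.integral_mul_const]
  -- the double-integral swap
  have hswap : (∫ x in (-π)..π, ∫ η in (-π)..π, F x η)
      = ∫ x in (-π)..π, ∫ η in (-π)..π, G x η := by
    rw [intervalIntegral.integral_of_le hle, intervalIntegral.integral_of_le hle]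
    simp_rw [intervalIntegral.integral_of_le hle]
    calc (∫ x, ∫ η, F x η ∂μ ∂μ) = ∫ η, ∫ x, F x η ∂μ ∂μ :=
          MeasureTheory.integral_integral_swap hFint
      _ = ∫ η, ∫ x, G x η ∂μ ∂μ := by
          apply MeasureTheory.integral_congr_ae
          filter_upwards with η
          have := keyx η
          rw [intervalIntegral.integral_of_le hle, intervalIntegral.integral_of_le hle] at this
          exact this
      _ = ∫ x, ∫ η, G x η ∂μ ∂μ := (MeasureTheory.integral_integral_swap hGint).symm
  -- assemble
  have step1 : ∀ x : ℝ, g x * fracLap α u x = (cFrac α / 2) * ∫ η in (-π)..π, F x η := by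
    intro x
    rw [fracLap]
    rw [show g x * (cFrac α / 2 * ∫ η in (-π)..π, (2 * u x - u (x + η) - u (x - η)) * Kper α η)
      = cFrac α / 2 * (g x * ∫ η in (-π)..π, (2 * u x - u (x + η) - u (x - η)) * Kper α η)
      from by ring]
    rw [← intervalIntegral.integral_const_mul]
    congr 1
    apply intervalIntegral.integral_congr
    intro η _
    simp only [hF]
    ring
  calc (∫ x in (-π)..π, g x * fracLap α u x)
      = ∫ x in (-π)..π, (cFrac α / 2) * ∫ η in (-π)..π, F x η := by
        apply intervalIntegral.integral_congr
        intro x _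
        exact step1 x
    _ = (cFrac α / 2) * ∫ x in (-π)..π, ∫ η in (-π)..π, F x η :=
        intervalIntegral.integral_const_mul _ _
    _ = (cFrac α / 2) * ∫ x in (-π)..π, ∫ η in (-π)..π, G x η := by rw [hswap]
    _ = (cFrac α / 2) * ∫ x in (-π)..π, ∫ η in (-π)..π,
          (g x - g (x - η)) * (u x - u (x - η)) * Kper α η := rfl
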